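/- Let ν(m) denote the number of 1's in the binary representation of the natural number m. Then for every natural number n and every nonzero real number t, B_{n+1}(t + 1/t) = ∑_{i=0}^{n} t^{ν(n-i) - ν(i)}, where the exponents ν(n-i) - ν(i) are integers (possibly negative). -/

import Mathlib

open Polynomial

/-- The Stern polynomials: `B 0 = 0`, `B 1 = 1`, `B (2n) = t * B n`,
`B (2n+1) = B n + B (n+1)`. -/
noncomputable def stern : ℕ → Polynomial ℤ
  | 0 => 0
  | 1 => 1
  | n + 2 =>
    if _h : n % 2 = 0 then
      X * stern (n / 2 + 1)
    else
      stern (n / 2 + 1) + stern (n / 2 + 2)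
  decreasing_by all_goals omega

/-- `nu m` is the number of ones in the binary expansion of `m`. -/
def nu (m : ℕ) : ℕ := (Nat.digits 2 m).sum

lemma stern_one : stern 1 = 1 := by rw [stern]

lemma stern_two_mul_add_two (m : ℕ) : stern (2*m+2) = X * stern (m+1) := by
  rw [stern]
  simp [Nat.mul_mod_right, Nat.mul_div_cancel_left]

lemma stern_two_mul_add_three (m : ℕ) : stern (2*m+3) = stern (m+1) + stern (m+2) := by
  have : 2*m+3 = (2*m+1) + 2 := by ring
  rw [this, stern]
  have h1 : (2*m+1) % 2 = 1 := by omega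
  have h2 : (2*m+1) / 2 = m := by omega
  simp [h1, h2]

lemma nu_zero : nu 0 = 0 := by simp [nu]

lemma nu_two_mul (m : ℕ) : nu (2*m) = nu m := by
  rcases Nat.eq_zero_or_pos m with rfl | h
  · simp
  · unfold nu
    rw [Nat.digits_def' (by norm_num) (by omega)]
    simp [Nat.mul_mod_right, Nat.mul_div_cancel_left]

lemma nu_two_mul_add_one (m : ℕ) : nu (2*m+1) = nu m + 1 := by
  unfold nu
  rw [Nat.digits_def' (by norm_num) (by omega)]
  have h1 : (2*m+1) % 2 = 1 := by omega
  have h2 : (2*m+1) / 2 = m := by omega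
  simp [h1, h2]; omega

lemma sum_range_even_odd (f : ℕ → ℝ) (m : ℕ) :
    ∑ i ∈ Finset.range (2*m), f i = ∑ j ∈ Finset.range m, (f (2*j) + f (2*j+1)) := by
  induction m with
  | zero => simp
  | succ m ih =>
    have : 2*(m+1) = (2*m+1)+1 := by ring
    rw [this, Finset.sum_range_succ, Finset.sum_range_succ, ih, Finset.sum_range_succ]
    rw [add_assoc]

theorem stern_eval_add_inv (n : ℕ) (t : ℝ) (ht : t ≠ 0) :
    Polynomial.aeval (t + 1 / t) (stern (n + 1)) =
      ∑ i ∈ Finset.range (n + 1), t ^ ((nu (n - i) : ℤ) - (nu i : ℤ)) := by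
  induction n using Nat.strong_induction_on with
  | _ n ih =>
    obtain ⟨m, rfl | rfl⟩ := Nat.even_or_odd' n
    · -- n = 2*m
      rcases Nat.eq_zero_or_pos m with rfl | hm
      · simp [stern_one, nu_zero]
      · obtain ⟨k, rfl⟩ : ∃ k, m = k + 1 := ⟨m - 1, by omega⟩
        -- n = 2k+2
        have hs : stern (2*(k+1) + 1) = stern (k+1) + stern (k+2) := by
          rw [show 2*(k+1)+1 = 2*k+3 from by ring, stern_two_mul_add_three]
        rw [hs, map_add, ih k (by omega), ih (k+1) (by omega)]
        conv_rhs => rw [Finset.sum_range_succ, sum_range_even_odd, Finset.sum_add_distrib]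
        have hodd : ∑ j ∈ Finset.range (k+1), t ^ ((nu (2*(k+1) - (2*j+1)) : ℤ) - (nu (2*j+1) : ℤ))
            = ∑ i ∈ Finset.range (k+1), t ^ ((nu (k - i) : ℤ) - (nu i : ℤ)) := by
          apply Finset.sum_congr rfl
          intro j hj
          have hjk : j ≤ k := by simpa using Nat.lt_succ_iff.mp (Finset.mem_range.mp hj)
          have h1 : 2*(k+1) - (2*j+1) = 2*(k-j) + 1 := by omega
          rw [h1, nu_two_mul_add_one, nu_two_mul_add_one]
          push_cast
          ring_nf
        have heven : (∑ j ∈ Finset.range (k+1), t ^ ((nu (2*(k+1) - 2*j) : ℤ) - (nu (2*j) : ℤ)))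
            + t ^ ((nu (2*(k+1) - 2*(k+1)) : ℤ) - (nu (2*(k+1)) : ℤ))
            = ∑ i ∈ Finset.range (k+1+1), t ^ ((nu (k+1 - i) : ℤ) - (nu i : ℤ)) := by
          conv_rhs => rw [Finset.sum_range_succ]
          congr 1
          · apply Finset.sum_congr rfl
            intro j hj
            have hjk : j ≤ k := by simpa using Nat.lt_succ_iff.mp (Finset.mem_range.mp hj)
            have h1 : 2*(k+1) - 2*j = 2*(k+1-j) := by omega
            rw [h1, nu_two_mul, nu_two_mul]
          · simp [nu_two_mul, nu_zero]
        conv_rhs => rw [add_right_comm]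
        rw [heven, hodd]
        ring
    · -- n = 2*m + 1
      have e1 : 2*m + 1 + 1 = 2*m + 2 := rfl
      rw [e1, stern_two_mul_add_two, map_mul, aeval_X, ih m (by omega)]
      rw [show 2*m+1+1 = 2*(m+1) from by ring, sum_range_even_odd]
      rw [Finset.mul_sum]
      apply Finset.sum_congr rfl
      intro j hj
      have hjm : j ≤ m := by simpa using Nat.lt_succ_iff.mp (Finset.mem_range.mp hj)
      have h1 : 2*m+1 - 2*j = 2*(m-j) + 1 := by omega
      have h2 : 2*m+1 - (2*j+1) = 2*(m-j) := by omega
      simp only [h1, h2, nu_two_mul, nu_two_mul_add_one]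
      have e : ((nu (m-j) : ℤ) + 1 - (nu j : ℤ)) = ((nu (m-j) : ℤ) - (nu j : ℤ)) + 1 := by ring
      have e' : ((nu (m-j) : ℤ) - ((nu j : ℤ) + 1)) = ((nu (m-j) : ℤ) - (nu j : ℤ)) - 1 := by ring
      push_cast
      rw [e, e', zpow_add_one₀ ht, zpow_sub_one₀ ht]
      field_simp
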